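/- Let x_ν > 0 solve 2x·Q(x)/q(x) + 1 - ν^{-1} = 0, where q(x) = π^{-1/2}e^{-x²} and Q(x) = ∫_{-∞}^x q(y) dy. Set z = (2ν√π)^{-1} and x̃_ν = (log z - (1/2)·log log z)^{1/2}. Then there is ν₀ > 0 such that for all 0 < ν < ν₀, |x_ν - x̃_ν| ≤ (1/2)·(log z - (1/2)·log log z)^{-1/2}·(log log z)/(log z). -/

import Mathlib

open Real MeasureTheory

/-- `q(x) = π^{-1/2} e^{-x²}`, the density of `N(0,1/2)`. -/
noncomputable def qdens (x : ℝ) : ℝ := Real.pi ^ (-(1 : ℝ) / 2) * Real.exp (-x ^ 2)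

/-- `Q(x) = ∫_{-∞}^x q(y) dy`, the CDF of `N(0,1/2)`. -/
noncomputable def Qcdf (x : ℝ) : ℝ := ∫ y in Set.Iic x, qdens y

lemma pi_rpow : Real.pi ^ (-(1 : ℝ) / 2) = (Real.sqrt Real.pi)⁻¹ := by
  rw [Real.sqrt_eq_rpow, ← Real.rpow_neg Real.pi_pos.le]
  norm_num

lemma integrable_gauss : Integrable (fun y : ℝ => Real.exp (-y ^ 2)) := by
  have := integrable_exp_neg_mul_sq (one_pos (α := ℝ))
  simpa using this

lemma integrable_qdens : Integrable qdens :=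
  (integrable_gauss.const_mul _)

lemma qdens_nonneg (x : ℝ) : 0 ≤ qdens x :=
  mul_nonneg (Real.rpow_nonneg Real.pi_pos.le _) (Real.exp_pos _).le

lemma qdens_pos (x : ℝ) : 0 < qdens x :=
  mul_pos (Real.rpow_pos_of_pos Real.pi_pos _) (Real.exp_pos _)

lemma integral_qdens : ∫ y, qdens y = 1 := by
  unfold qdens
  rw [MeasureTheory.integral_const_mul]
  have : ∫ y : ℝ, Real.exp (-y ^ 2) = Real.sqrt Real.pi := by
    have := integral_gaussian 1
    simpa using this
  rw [this, pi_rpow, inv_mul_cancel₀ (by positivity : Real.sqrt Real.pi ≠ 0)]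

lemma Qcdf_le_one (x : ℝ) : Qcdf x ≤ 1 := by
  rw [← integral_qdens]
  exact setIntegral_le_integral integrable_qdens (Filter.Eventually.of_forall qdens_nonneg)

lemma tail_moment (a : ℝ) (ha : 0 < a) :
    ∫ y in Set.Ioi a, y * Real.exp (-y ^ 2) = Real.exp (-a ^ 2) / 2 := by
  have hderiv : ∀ y ∈ Set.Ioi a, HasDerivAt (fun t : ℝ => -Real.exp (-t ^ 2) / 2)
      (y * Real.exp (-y ^ 2)) y := by
    intro y _
    have h1 : HasDerivAt (fun t : ℝ => -t ^ 2) (-(2 * y)) y := by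
      exact (hasDerivAt_pow 2 y).neg.congr_deriv (by simp)
    have h2 : HasDerivAt (fun t : ℝ => -Real.exp (-t ^ 2) / 2)
        (-(Real.exp (-y ^ 2) * -(2 * y)) / 2) y := (h1.exp).neg.div_const 2
    convert h2 using 1
    ring
  have htend : Filter.Tendsto (fun t : ℝ => -Real.exp (-t ^ 2) / 2) Filter.atTop (nhds 0) := by
    have h1 : Filter.Tendsto (fun t : ℝ => -t ^ 2) Filter.atTop Filter.atBot :=
      Filter.tendsto_neg_atTop_atBot.comp (Filter.tendsto_pow_atTop two_ne_zero)
    have h2 := (Real.tendsto_exp_atBot.comp h1).neg.div_const 2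
    simpa using h2
  have hda : HasDerivAt (fun t : ℝ => -Real.exp (-t ^ 2) / 2) (a * Real.exp (-a ^ 2)) a := by
    have h1 : HasDerivAt (fun t : ℝ => -t ^ 2) (-(2 * a)) a := by
      exact (hasDerivAt_pow 2 a).neg.congr_deriv (by simp)
    have h2 : HasDerivAt (fun t : ℝ => -Real.exp (-t ^ 2) / 2)
        (-(Real.exp (-a ^ 2) * -(2 * a)) / 2) a := (h1.exp).neg.div_const 2
    convert h2 using 1
    ring
  have := integral_Ioi_of_hasDerivAt_of_nonneg
    (g := fun t : ℝ => -Real.exp (-t ^ 2) / 2) (g' := fun y => y * Real.exp (-y ^ 2)) (a := a)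
    (l := 0) ?_ hderiv ?_ htend
  · rw [this]; ring
  · exact hda.continuousAt.continuousWithinAt
  · intro y hy
    exact mul_nonneg (le_of_lt (ha.trans hy)) (Real.exp_pos _).le

lemma tail_integrable (a : ℝ) (ha : 0 < a) :
    IntegrableOn (fun y : ℝ => y * Real.exp (-y ^ 2)) (Set.Ioi a) := by
  have hd : ∀ y ∈ Set.Ici a, HasDerivAt (fun t : ℝ => -Real.exp (-t ^ 2) / 2)
      (y * Real.exp (-y ^ 2)) y := by
    intro y _
    have h1 : HasDerivAt (fun t : ℝ => -t ^ 2) (-(2 * y)) y := by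
      exact (hasDerivAt_pow 2 y).neg.congr_deriv (by simp)
    have h2 : HasDerivAt (fun t : ℝ => -Real.exp (-t ^ 2) / 2)
        (-(Real.exp (-y ^ 2) * -(2 * y)) / 2) y := (h1.exp).neg.div_const 2
    convert h2 using 1
    ring
  have htend : Filter.Tendsto (fun t : ℝ => -Real.exp (-t ^ 2) / 2) Filter.atTop (nhds 0) := by
    have h1 : Filter.Tendsto (fun t : ℝ => -t ^ 2) Filter.atTop Filter.atBot :=
      Filter.tendsto_neg_atTop_atBot.comp (Filter.tendsto_pow_atTop two_ne_zero)
    have h2 := (Real.tendsto_exp_atBot.comp h1).neg.div_const 2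
    simpa using h2
  exact integrableOn_Ioi_deriv_of_nonneg' hd
    (fun y hy => mul_nonneg (le_of_lt (ha.trans hy)) (Real.exp_pos _).le) htend

lemma tail_bound (a : ℝ) (ha : 0 < a) :
    ∫ y in Set.Ioi a, Real.exp (-y ^ 2) ≤ Real.exp (-a ^ 2) / (2 * a) := by
  have h1 : ∫ y in Set.Ioi a, Real.exp (-y ^ 2) ≤
      ∫ y in Set.Ioi a, (y / a) * Real.exp (-y ^ 2) := by
    apply setIntegral_mono_on integrable_gauss.integrableOn
    · have heq : (fun y : ℝ => (y / a) * Real.exp (-y ^ 2))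
          = fun y : ℝ => (y * Real.exp (-y ^ 2)) / a := by funext y; ring
      rw [heq]
      exact (tail_integrable a ha).div_const a
    · exact measurableSet_Ioi
    · intro y hy
      have h2 : (1 : ℝ) ≤ y / a := (le_div_iff₀ ha).2 (by simpa using (le_of_lt hy))
      nlinarith [Real.exp_pos (-y ^ 2)]
  have h2 : ∫ y in Set.Ioi a, (y / a) * Real.exp (-y ^ 2)
      = (∫ y in Set.Ioi a, y * Real.exp (-y ^ 2)) / a := by
    rw [← integral_div]
    congr 1; funext y; ring
  rw [h2, tail_moment a ha] at h1
  calc ∫ y in Set.Ioi a, Real.exp (-y ^ 2) ≤ Real.exp (-a ^ 2) / 2 / a := h1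
    _ = Real.exp (-a ^ 2) / (2 * a) := by ring

lemma Qcdf_ge (x : ℝ) (hx : 0 < x) :
    1 - (Real.sqrt Real.pi)⁻¹ * (Real.exp (-x ^ 2) / (2 * x)) ≤ Qcdf x := by
  have hsplit := intervalIntegral.integral_Iic_add_Ioi (f := qdens) (b := x) (μ := volume)
    integrable_qdens.integrableOn integrable_qdens.integrableOn
  rw [integral_qdens] at hsplit
  have htail : ∫ y in Set.Ioi x, qdens y ≤ (Real.sqrt Real.pi)⁻¹ * (Real.exp (-x ^ 2) / (2 * x)) := by
    unfold qdens
    rw [MeasureTheory.integral_const_mul, pi_rpow]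
    have h := tail_bound x hx
    have hs : (0:ℝ) < (Real.sqrt Real.pi)⁻¹ := by positivity
    exact mul_le_mul_of_nonneg_left h hs.le
  have : Qcdf x = 1 - ∫ y in Set.Ioi x, qdens y := by
    unfold Qcdf; linarith
  linarith

lemma gmono {a b : ℝ} (ha : 0 ≤ a) (hab : a < b) :
    a * Real.exp (a ^ 2) < b * Real.exp (b ^ 2) := by
  have h1 : Real.exp (a ^ 2) ≤ Real.exp (b ^ 2) := Real.exp_le_exp.2 (by nlinarith)
  nlinarith [Real.exp_pos (a ^ 2), Real.exp_pos (b ^ 2)]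

set_option maxHeartbeats 1000000 in
/-- If `x_ν > 0` solves `2xQ(x)/q(x) + 1 - ν⁻¹ = 0`, and `x̃_ν = (log z - ½ log log z)^{1/2}` with
`z = (2ν√π)⁻¹`, then for all sufficiently small `ν > 0`,
`|x_ν - x̃_ν| ≤ ½ (log z - ½ log log z)^{-1/2} (log log z)/(log z)`. -/
theorem stmt_13 :
    ∃ ν₀ > (0 : ℝ), ∀ ν : ℝ, 0 < ν → ν < ν₀ → ∀ x : ℝ, 0 < x →
      2 * x * Qcdf x / qdens x + 1 - ν⁻¹ = 0 →
      |x - (Real.log (1 / (2 * ν * Real.sqrt Real.pi)) -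
            (1 / 2) * Real.log (Real.log (1 / (2 * ν * Real.sqrt Real.pi)))) ^ ((1 : ℝ) / 2)| ≤
        (1 / 2) * (Real.log (1 / (2 * ν * Real.sqrt Real.pi)) -
            (1 / 2) * Real.log (Real.log (1 / (2 * ν * Real.sqrt Real.pi)))) ^ (-(1 : ℝ) / 2) *
          (Real.log (Real.log (1 / (2 * ν * Real.sqrt Real.pi))) /
            Real.log (1 / (2 * ν * Real.sqrt Real.pi))) := by
  have hsp : 0 < Real.sqrt Real.pi := Real.sqrt_pos.2 Real.pi_pos
  refine ⟨Real.exp (-10) / (2 * Real.sqrt Real.pi), by positivity, ?_⟩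
  intro ν hν hνlt x hx heq
  set z : ℝ := 1 / (2 * ν * Real.sqrt Real.pi) with hz_def
  clear_value z
  have hzpos : 0 < z := by rw [hz_def]; positivity
  have hzgt : Real.exp 10 < z := by
    rw [hz_def, lt_div_iff₀ (by positivity)]
    have h1 : ν * (2 * Real.sqrt Real.pi) < Real.exp (-10) :=
      (lt_div_iff₀ (by positivity)).1 hνlt
    have h2 : Real.exp 10 * Real.exp (-10) = 1 := by rw [← Real.exp_add]; norm_num
    nlinarith only [h1, h2, Real.exp_pos (10:ℝ)]
  set ℓ : ℝ := Real.log z with hl_def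
  clear_value ℓ
  have hℓ : 10 < ℓ := by
    have h := Real.log_lt_log (Real.exp_pos 10) hzgt
    rw [Real.log_exp] at h
    rw [hl_def]; exact h
  have hℓpos : 0 < ℓ := by linarith
  have hexpℓ : Real.exp ℓ = z := by rw [hl_def]; exact Real.exp_log hzpos
  set m : ℝ := Real.log ℓ with hm_def
  clear_value m
  have hm1 : 1 < m := by
    have h1 : Real.exp 1 < ℓ := by linarith [Real.exp_one_lt_d9]
    have h := Real.log_lt_log (Real.exp_pos 1) h1
    rw [Real.log_exp] at h
    rw [hm_def]; exact h
  have hm0 : 0 < m := by linarith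
  have hmℓ : m < ℓ := by
    have := Real.log_lt_sub_one_of_pos hℓpos (by linarith : ℓ ≠ 1)
    rw [← hm_def] at this; linarith
  have hexpm : Real.exp m = ℓ := by rw [hm_def]; exact Real.exp_log hℓpos
  set L : ℝ := ℓ - 1 / 2 * m with hL_def
  clear_value L
  have hLgt : ℓ / 2 < L := by rw [hL_def]; linarith
  have hLpos : 0 < L := by linarith
  set s : ℝ := Real.sqrt L with hs_def
  clear_value s
  have hs2 : s ^ 2 = L := by rw [hs_def]; exact Real.sq_sqrt hLpos.le
  have hspos : 0 < s := by rw [hs_def]; exact Real.sqrt_pos.2 hLpos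
  have hsgt : 2 < s := by
    have h4 : Real.sqrt 4 < Real.sqrt L := Real.sqrt_lt_sqrt (by norm_num) (by linarith)
    rw [show (4:ℝ) = 2^2 by norm_num, Real.sqrt_sq (by norm_num : (0:ℝ) ≤ 2)] at h4
    rw [hs_def]; exact h4
  have hrpow1 : L ^ ((1:ℝ)/2) = s := by rw [hs_def, Real.sqrt_eq_rpow]
  have hrpow2 : L ^ (-(1:ℝ)/2) = s⁻¹ := by
    rw [show (-(1:ℝ)/2) = -((1:ℝ)/2) by ring, Real.rpow_neg hLpos.le, hrpow1]
  rw [hrpow1, hrpow2]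
  set δ : ℝ := 1 / 2 * s⁻¹ * (m / ℓ) with hδ_def
  have hδpos : 0 < δ := by rw [hδ_def]; positivity
  have h2sδ : 2 * s * δ = m / ℓ := by rw [hδ_def]; field_simp
  clear_value δ
  have hδsq : δ ^ 2 = m ^ 2 / (4 * L * ℓ ^ 2) := by
    rw [hδ_def, ← hs2]; field_simp; ring
  have hδ2 : δ ^ 2 ≤ m / (4 * ℓ) := by
    rw [hδsq, div_le_div_iff₀ (by positivity) (by positivity)]
    have h1 : m ≤ L * ℓ := by nlinarith only [hLgt, hℓ, hmℓ, mul_pos hℓpos hℓpos, hℓpos]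
    nlinarith only [h1, mul_pos hm0 hℓpos, hm0, hℓpos, hLpos, mul_pos (mul_pos hm0 hℓpos) hℓpos]
  -- exp facts
  have hsqℓ : Real.exp (1 / 2 * m) = Real.sqrt ℓ := by
    have h1 : Real.exp (1 / 2 * m) ^ 2 = ℓ := by
      rw [sq, ← Real.exp_add, ← hexpm]; congr 1; ring
    rw [← h1, Real.sqrt_sq (Real.exp_pos _).le]
  have hexpL : Real.exp L = z / Real.sqrt ℓ := by
    rw [hL_def, Real.exp_sub, hexpℓ, hsqℓ]
  have hsℓpos : 0 < Real.sqrt ℓ := Real.sqrt_pos.2 hℓpos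
  -- bounds on x * exp (x^2) from the equation
  have hq := qdens_pos x
  have hqd : qdens x = (Real.sqrt Real.pi)⁻¹ * Real.exp (-x ^ 2) := by
    unfold qdens; rw [pi_rpow]
  have h3 : 2 * x * Qcdf x / qdens x = ν⁻¹ - 1 := by linarith only [heq]
  have heq2 : 2 * x * Qcdf x = (ν⁻¹ - 1) * qdens x := (div_eq_iff hq.ne').1 h3
  rw [hqd] at heq2
  have hνinv : ν⁻¹ = 2 * z * Real.sqrt Real.pi := by
    rw [hz_def]; field_simp
  have hprod : 2 * ν * Real.sqrt Real.pi * z = 1 := by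
    rw [hz_def]; field_simp
  have hE : 0 < Real.exp (x ^ 2) := Real.exp_pos _
  have hEneg : Real.exp (-x ^ 2) = (Real.exp (x ^ 2))⁻¹ := Real.exp_neg _
  -- upper bound: x * exp (x^2) ≤ z
  have hQg := Qcdf_ge x hx
  have h6 := mul_le_mul_of_nonneg_left hQg (by positivity : (0:ℝ) ≤ 2 * x)
  have h7 : 2 * x * (1 - (Real.sqrt Real.pi)⁻¹ * (Real.exp (-x ^ 2) / (2 * x)))
      = 2 * x - (Real.sqrt Real.pi)⁻¹ * Real.exp (-x ^ 2) := by
    field_simp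
  rw [h7, heq2] at h6
  have h5 : 2 * x ≤ ν⁻¹ * ((Real.sqrt Real.pi)⁻¹ * Real.exp (-x ^ 2)) := by linarith only [h6]
  rw [hνinv, hEneg] at h5
  have hid2 : 2 * z * Real.sqrt Real.pi * ((Real.sqrt Real.pi)⁻¹ * (Real.exp (x ^ 2))⁻¹)
      * Real.exp (x ^ 2) = 2 * z := by field_simp
  have h10 := mul_le_mul_of_nonneg_right h5 hE.le
  rw [hid2] at h10
  have hA_le : x * Real.exp (x ^ 2) ≤ z := by linarith only [h10]
  -- lower bound: z * (1 - ν) ≤ x * exp (x^2)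
  have hQx := Qcdf_le_one x
  have h8 : (ν⁻¹ - 1) * ((Real.sqrt Real.pi)⁻¹ * Real.exp (-x ^ 2)) ≤ 2 * x := by
    rw [← heq2]
    have := mul_le_mul_of_nonneg_left hQx (by positivity : (0:ℝ) ≤ 2 * x)
    linarith only [this]
  rw [hνinv, hEneg] at h8
  have h9 := mul_le_mul_of_nonneg_right h8
    (by positivity : (0:ℝ) ≤ Real.sqrt Real.pi * Real.exp (x ^ 2))
  have hid3 : (2 * z * Real.sqrt Real.pi - 1) * ((Real.sqrt Real.pi)⁻¹ * (Real.exp (x ^ 2))⁻¹)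
      * (Real.sqrt Real.pi * Real.exp (x ^ 2)) = 2 * z * Real.sqrt Real.pi - 1 := by field_simp
  rw [hid3] at h9
  have hA_ge : z * (1 - ν) ≤ x * Real.exp (x ^ 2) := by
    have h11 : 2 * Real.sqrt Real.pi * (z * (1 - ν)) ≤
        2 * Real.sqrt Real.pi * (x * Real.exp (x ^ 2)) := by
      nlinarith only [h9, hprod]
    exact le_of_mul_le_mul_left h11 (by positivity)
  -- key inequality for upper bound
  have hkey : Real.sqrt ℓ ≤ s * (1 + m / ℓ) := by
    have h1 : ℓ ≤ (s * (1 + m / ℓ)) ^ 2 := by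
      have e : (s * (1 + m / ℓ)) ^ 2 = L * ((ℓ + m) ^ 2 / ℓ ^ 2) := by
        rw [mul_pow, hs2]; congr 1; field_simp
      rw [e, hL_def, mul_div_assoc', le_div_iff₀ (by positivity)]
      nlinarith only [mul_nonneg hm0.le (sub_nonneg.2 (mul_self_le_mul_self hm0.le hmℓ.le)),
        mul_nonneg hm0.le (mul_pos hℓpos hℓpos).le]
    calc Real.sqrt ℓ ≤ Real.sqrt ((s * (1 + m / ℓ)) ^ 2) := Real.sqrt_le_sqrt h1
      _ = s * (1 + m / ℓ) := Real.sqrt_sq (by positivity)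
  -- key inequality for lower bound
  have hw4 : m / (4 * ℓ) ≤ 1 / 4 := by
    rw [div_le_div_iff₀ (by positivity) (by norm_num)]; linarith
  have hw0 : (0:ℝ) < m / (4 * ℓ) := by positivity
  have hkey2 : s ≤ Real.sqrt ℓ * (1 - m / (4 * ℓ)) := by
    have hnn : (0:ℝ) ≤ 1 - m / (4 * ℓ) := by linarith
    have h1 : L ≤ (Real.sqrt ℓ * (1 - m / (4 * ℓ))) ^ 2 := by
      have e : (Real.sqrt ℓ * (1 - m / (4 * ℓ))) ^ 2 = ℓ * ((4 * ℓ - m) ^ 2 / (4 * ℓ) ^ 2) := by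
        rw [mul_pow, Real.sq_sqrt hℓpos.le]; congr 1; field_simp
      rw [e, hL_def, mul_div_assoc', le_div_iff₀ (by positivity)]
      nlinarith only [mul_nonneg hℓpos.le (sq_nonneg m)]
    calc s = Real.sqrt L := hs_def
      _ ≤ Real.sqrt ((Real.sqrt ℓ * (1 - m / (4 * ℓ))) ^ 2) := Real.sqrt_le_sqrt h1
      _ = Real.sqrt ℓ * (1 - m / (4 * ℓ)) := Real.sqrt_sq (by positivity)
  -- smallness of ν
  have h4w : m / ℓ = 4 * (m / (4 * ℓ)) := by field_simp; all_goals ring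
  have h2ν : 2 * ν ≤ m / ℓ := by
    have hzℓ : ℓ ≤ z := by rw [← hexpℓ]; linarith [Real.add_one_le_exp ℓ]
    have hπ1 : 1 ≤ Real.sqrt Real.pi := by
      rw [show (1:ℝ) = Real.sqrt 1 by simp]
      exact Real.sqrt_le_sqrt (by linarith [Real.pi_gt_three])
    have h1 : 2 * ν * ℓ ≤ 1 := by
      have p1 : 0 ≤ 2 * ν * (z - ℓ) := mul_nonneg (by linarith only [hν]) (by linarith only [hzℓ])
      have p2 : 0 ≤ 2 * ν * z * (Real.sqrt Real.pi - 1) :=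
        mul_nonneg (by positivity) (by linarith only [hπ1])
      nlinarith only [p1, p2, hprod]
    have h2 : 2 * ν ≤ 1 / ℓ := by rw [le_div_iff₀ hℓpos]; linarith
    have h3 : 1 / ℓ ≤ m / ℓ := by
      rw [div_le_div_iff₀ hℓpos hℓpos]
      nlinarith only [hm1, hℓpos]
    linarith
  -- upper bound conclusion
  have hup : z ≤ (s + δ) * Real.exp ((s + δ) ^ 2) := by
    have hsd2 : (s + δ) ^ 2 = L + m / ℓ + δ ^ 2 := by rw [add_sq, hs2, h2sδ]
    have e1 : Real.exp (L + m / ℓ) = z / Real.sqrt ℓ * Real.exp (m / ℓ) := by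
      rw [Real.exp_add, hexpL]
    calc z = z / Real.sqrt ℓ * Real.sqrt ℓ := by field_simp
      _ ≤ z / Real.sqrt ℓ * (s * (1 + m / ℓ)) :=
          mul_le_mul_of_nonneg_left hkey (by positivity)
      _ = s * (z / Real.sqrt ℓ * (1 + m / ℓ)) := by ring
      _ ≤ s * (z / Real.sqrt ℓ * Real.exp (m / ℓ)) := by
          apply mul_le_mul_of_nonneg_left ?_ hspos.le
          apply mul_le_mul_of_nonneg_left ?_ (by positivity)
          linarith [Real.add_one_le_exp (m / ℓ)]
      _ = s * Real.exp (L + m / ℓ) := by rw [e1]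
      _ ≤ s * Real.exp ((s + δ) ^ 2) := by
          apply mul_le_mul_of_nonneg_left (Real.exp_le_exp.2 ?_) hspos.le
          rw [hsd2]; linarith only [sq_nonneg δ]
      _ ≤ (s + δ) * Real.exp ((s + δ) ^ 2) := by
          linarith only [mul_nonneg hδpos.le (Real.exp_pos ((s + δ) ^ 2)).le]
  -- lower bound conclusion
  have hdown : (s - δ) * Real.exp ((s - δ) ^ 2) ≤ z * (1 - ν) := by
    have hsd2 : (s - δ) ^ 2 = L - m / ℓ + δ ^ 2 := by rw [sub_sq, hs2, h2sδ]
    have hu3 : 1 + 3 * (m / (4 * ℓ)) ≤ 1 + (m / ℓ - δ ^ 2) := by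
      have h1 : 3 * (m / (4 * ℓ)) = m / ℓ - m / (4 * ℓ) := by field_simp; ring
      linarith [hδ2]
    have hupos : (0:ℝ) < 1 + 3 * (m / (4 * ℓ)) := by positivity
    have hexpbd : Real.exp (δ ^ 2 - m / ℓ) ≤ 1 / (1 + 3 * (m / (4 * ℓ))) := by
      have h1 : 1 + (m / ℓ - δ ^ 2) ≤ Real.exp (m / ℓ - δ ^ 2) := by
        linarith [Real.add_one_le_exp (m / ℓ - δ ^ 2)]
      rw [show δ ^ 2 - m / ℓ = -(m / ℓ - δ ^ 2) by ring, Real.exp_neg]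
      have := one_div_le_one_div_of_le hupos (le_trans hu3 h1)
      simpa [one_div] using this
    have hfrac : (1 - m / (4 * ℓ)) * (1 / (1 + 3 * (m / (4 * ℓ)))) ≤ 1 - ν := by
      rw [mul_one_div, div_le_iff₀ hupos]
      have hν2w : ν ≤ 2 * (m / (4 * ℓ)) := by rw [h4w] at h2ν; linarith
      have p1 := mul_le_mul_of_nonneg_right hν2w hw0.le
      have p2 := mul_le_mul_of_nonneg_left hw4 hw0.le
      linarith only [p1, p2, hν2w, hw0]
    have hsℓν : s * Real.exp (δ ^ 2 - m / ℓ) ≤ Real.sqrt ℓ * (1 - ν) := by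
      calc s * Real.exp (δ ^ 2 - m / ℓ)
          ≤ Real.sqrt ℓ * (1 - m / (4 * ℓ)) * (1 / (1 + 3 * (m / (4 * ℓ)))) :=
            mul_le_mul hkey2 hexpbd (Real.exp_pos _).le
              (mul_nonneg hsℓpos.le (by linarith only [hw4]))
        _ = Real.sqrt ℓ * ((1 - m / (4 * ℓ)) * (1 / (1 + 3 * (m / (4 * ℓ))))) := by ring
        _ ≤ Real.sqrt ℓ * (1 - ν) := mul_le_mul_of_nonneg_left hfrac hsℓpos.le
    calc (s - δ) * Real.exp ((s - δ) ^ 2) ≤ s * Real.exp ((s - δ) ^ 2) := by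
          linarith only [mul_nonneg hδpos.le (Real.exp_pos ((s - δ) ^ 2)).le]
      _ = Real.exp L * (s * Real.exp (δ ^ 2 - m / ℓ)) := by
          rw [hsd2, show L - m / ℓ + δ ^ 2 = L + (δ ^ 2 - m / ℓ) by ring, Real.exp_add]
          ring
      _ ≤ Real.exp L * (Real.sqrt ℓ * (1 - ν)) :=
          mul_le_mul_of_nonneg_left hsℓν (Real.exp_pos _).le
      _ = z * (1 - ν) := by rw [hexpL]; field_simp; all_goals ring
  -- conclude
  rw [abs_le]
  constructor
  · by_contra hcon
    push_neg at hcon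
    have hxs : x < s - δ := by linarith
    have hg := gmono hx.le hxs
    linarith only [hg, hdown, hA_ge]
  · by_contra hcon
    push_neg at hcon
    have hxs : s + δ < x := by linarith
    have hg := gmono (by linarith only [hsgt, hδpos] : (0:ℝ) ≤ s + δ) hxs
    linarith only [hg, hup, hA_le]
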